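/- arXiv:0807.5028 — 4 statements merged into one kernel-verified Lean document; each statement's English description precedes it below -/
import Mathlib

section
/- For all integers k ≥ 2 and n ≥ 0, the number of abelian squares over a k-letter alphabet satisfies the recurrence f_k(n) = Σ_{0≤j≤n} C(n,j)^2 · f_{k-1}(j). -/
/-- `abelianSquares k n` is the number of abelian squares of length `2n` over a
`k`-letter alphabet: pairs `(x, x')` of words of length `n` over `Fin k` such that
for each letter `a`, the number of occurrences of `a` in `x` equals the number of
occurrences of `a` in `x'`. -/
def abelianSquares (k n : ℕ) : ℕ :=
  Fintype.card {p : (Fin n → Fin k) × (Fin n → Fin k) //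
    ∀ a : Fin k,
      (Finset.univ.filter fun i => p.1 i = a).card =
      (Finset.univ.filter fun i => p.2 i = a).card}

namespace AbSqAux

open Finset

/-- The abelian-square condition on a pair of words. -/
def bcond (k n : ℕ) (p : (Fin n → Fin k) × (Fin n → Fin k)) : Prop :=
  ∀ a : Fin k,
    (Finset.univ.filter fun i => p.1 i = a).card =
    (Finset.univ.filter fun i => p.2 i = a).card

instance (k n : ℕ) : DecidablePred (bcond k n) := fun _ => by
  unfold bcond; infer_instance

lemma abelianSquares_eq (k n : ℕ) :
    abelianSquares k n = (Finset.univ.filter (bcond k n)).card := by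
  rw [abelianSquares]
  convert Fintype.card_subtype (bcond k n) using 2
  rfl

variable {m n j : ℕ}

/-- Rebuild a word over `Fin (m+1)` from a set `s` of positions (where the word avoids
the last letter, with card `j`) and a word `y` over `Fin m` of length `j`. -/
def build (s : Finset (Fin n)) (y : Fin j → Fin m) : Fin n → Fin (m + 1) :=
  if hs : s.card = j then
    (fun i => if h : i ∈ s then
        Fin.castSucc (y ((s.orderIsoOfFin hs).symm ⟨i, h⟩)) else Fin.last m)
  else fun _ => Fin.last m

lemma build_of_mem {s : Finset (Fin n)} (hs : s.card = j) {y : Fin j → Fin m}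
    {i : Fin n} (h : i ∈ s) :
    build s y i = Fin.castSucc (y ((s.orderIsoOfFin hs).symm ⟨i, h⟩)) := by
  rw [build, dif_pos hs, dif_pos h]

lemma build_of_not_mem {s : Finset (Fin n)} (hs : s.card = j) {y : Fin j → Fin m}
    {i : Fin n} (h : i ∉ s) : build s y i = Fin.last m := by
  rw [build, dif_pos hs, dif_neg h]

lemma build_apply_orderIso {s : Finset (Fin n)} (hs : s.card = j) {y : Fin j → Fin m}
    (r : Fin j) : build s y ((s.orderIsoOfFin hs r : Fin n)) = Fin.castSucc (y r) := by
  rw [build_of_mem hs (s.orderIsoOfFin hs r).2]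
  congr 1
  exact congrArg y ((s.orderIsoOfFin hs).symm_apply_apply r)

lemma build_ne_last_iff {s : Finset (Fin n)} (hs : s.card = j) {y : Fin j → Fin m}
    {i : Fin n} : build s y i ≠ Fin.last m ↔ i ∈ s := by
  constructor
  · intro h
    by_contra hmem
    exact h (build_of_not_mem hs hmem)
  · intro h
    rw [build_of_mem hs h]
    exact (Fin.castSucc_lt_last _).ne

lemma filter_build_ne_last {s : Finset (Fin n)} (hs : s.card = j) {y : Fin j → Fin m} :
    (Finset.univ.filter fun i => build s y i ≠ Fin.last m) = s := by
  ext i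
  simp [build_ne_last_iff hs]

lemma card_filter_eq_last {x : Fin n → Fin (m + 1)} :
    (Finset.univ.filter fun i => x i = Fin.last m).card =
      n - (Finset.univ.filter fun i => x i ≠ Fin.last m).card := by
  have h := Finset.card_filter_add_card_filter_not
    (s := (Finset.univ : Finset (Fin n))) (fun i => x i = Fin.last m)
  simp only [Finset.card_univ, Fintype.card_fin] at h
  simp only [ne_eq]
  omega

lemma card_build_eq_castSucc {s : Finset (Fin n)} (hs : s.card = j) {y : Fin j → Fin m}
    (b : Fin m) :
    (Finset.univ.filter fun i => build s y i = Fin.castSucc b).card =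
    (Finset.univ.filter fun r => y r = b).card := by
  refine (Finset.card_bij' (fun r _ => ((s.orderIsoOfFin hs r : Fin n)))
    (fun i hi => (s.orderIsoOfFin hs).symm ⟨i, ?_⟩) ?_ ?_ ?_ ?_).symm
  · -- membership in s from filter
    have h : build s y i = Fin.castSucc b := by
      simpa using hi
    by_contra hmem
    rw [build_of_not_mem hs hmem] at h
    exact absurd h.symm (Fin.castSucc_lt_last b).ne
  · intro r hr
    simp only [Finset.mem_filter, Finset.mem_univ, true_and] at hr ⊢
    rw [build_apply_orderIso hs, hr]
  · intro i hi
    simp only [Finset.mem_filter, Finset.mem_univ, true_and] at hi ⊢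
    have hmem : i ∈ s := by
      by_contra hmem
      rw [build_of_not_mem hs hmem] at hi
      exact absurd hi.symm (Fin.castSucc_lt_last b).ne
    have := build_of_mem hs (y := y) hmem
    rw [this] at hi
    exact Fin.castSucc_injective m hi
  · intro r _
    exact (s.orderIsoOfFin hs).symm_apply_apply r
  · intro i hi
    simp [OrderIso.apply_symm_apply]

/-- Extraction: `build` of the canonical data of a word gives the word back. -/
lemma build_extract (x : Fin n → Fin (m + 1))
    (hs : (Finset.univ.filter fun i => x i ≠ Fin.last m).card = j) :
    build (Finset.univ.filter fun i => x i ≠ Fin.last m)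
      (fun r => (x (((Finset.univ.filter fun i => x i ≠ Fin.last m).orderIsoOfFin hs r
        : Fin n))).castPred ((Finset.mem_filter.mp
          ((Finset.univ.filter fun i => x i ≠ Fin.last m).orderIsoOfFin hs r).2).2)) = x := by
  set s := (Finset.univ.filter fun i => x i ≠ Fin.last m) with hsdef
  funext i
  by_cases h : i ∈ s
  · rw [build_of_mem hs h]
    rw [OrderIso.apply_symm_apply]
    exact Fin.castSucc_castPred _ _
  · rw [build_of_not_mem hs h]
    have : ¬ (x i ≠ Fin.last m) := by simpa [hsdef] using h
    push_neg at this
    exact this.symm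

end AbSqAux

open Finset AbSqAux in
theorem abelianSquares_recurrence (k : ℕ) (hk : 2 ≤ k) (n : ℕ) :
    abelianSquares k n =
      ∑ j ∈ Finset.range (n + 1), (n.choose j) ^ 2 * abelianSquares (k - 1) j := by
  obtain ⟨m, rfl⟩ : ∃ m, k = m + 1 := ⟨k - 1, by omega⟩
  simp only [Nat.add_sub_cancel]
  rw [abelianSquares_eq]
  rw [Finset.card_eq_sum_card_fiberwise
    (f := fun p : (Fin n → Fin (m+1)) × (Fin n → Fin (m+1)) =>
      (Finset.univ.filter fun i => p.1 i ≠ Fin.last m).card)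
    (t := Finset.range (n + 1))
    (fun p _ => by
      rw [Finset.mem_coe, Finset.mem_range, Nat.lt_succ_iff]
      exact (Finset.card_filter_le _ _).trans (by simp))]
  refine Finset.sum_congr rfl fun j hj => ?_
  rw [Finset.filter_filter]
  rw [abelianSquares_eq]
  -- target finset
  have hT : (((Finset.univ.powersetCard j ×ˢ Finset.univ.powersetCard j) ×ˢ
      (Finset.univ.filter (bcond m j))) :
      Finset ((Finset (Fin n) × Finset (Fin n)) ×
        ((Fin j → Fin m) × (Fin j → Fin m)))).card =
      n.choose j ^ 2 * (Finset.univ.filter (bcond m j)).card := by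
    rw [Finset.card_product, Finset.card_product, Finset.card_powersetCard]
    simp [pow_two, Finset.card_univ, mul_assoc]
  rw [← hT]
  -- bijection from the target to the fiber
  refine (Finset.card_bij
    (fun b _ => (build b.1.1 b.2.1, build b.1.2 b.2.2)) ?_ ?_ ?_).symm
  · -- maps into the fiber
    rintro ⟨⟨s, t⟩, y, y'⟩ hb
    simp only [Finset.mem_product, Finset.mem_powersetCard_univ, Finset.mem_filter,
      Finset.mem_univ, true_and] at hb
    obtain ⟨⟨hs, ht⟩, hq⟩ := hb
    simp only [Finset.mem_filter, Finset.mem_univ, true_and]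
    constructor
    · intro a
      induction a using Fin.lastCases with
      | last =>
        rw [card_filter_eq_last, card_filter_eq_last,
          filter_build_ne_last hs, filter_build_ne_last ht, hs, ht]
      | cast b =>
        rw [card_build_eq_castSucc hs b, card_build_eq_castSucc ht b]
        exact hq b
    · rw [filter_build_ne_last hs, hs]
  · -- injective
    rintro ⟨⟨s, t⟩, y, y'⟩ hb ⟨⟨s', t'⟩, z, z'⟩ hb' heq
    simp only [Finset.mem_product, Finset.mem_powersetCard_univ, Finset.mem_filter,
      Finset.mem_univ, true_and] at hb hb'
    obtain ⟨⟨hs, ht⟩, -⟩ := hb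
    obtain ⟨⟨hs', ht'⟩, -⟩ := hb'
    obtain ⟨h1, h2⟩ := Prod.mk.injEq .. ▸ heq
    have hss : s = s' := by
      rw [← filter_build_ne_last hs (y := y), ← filter_build_ne_last hs' (y := z), h1]
    have htt : t = t' := by
      rw [← filter_build_ne_last ht (y := y'), ← filter_build_ne_last ht' (y := z'), h2]
    subst hss htt
    have hy : y = z := by
      funext r
      have e1 := build_apply_orderIso hs (y := y) r
      have e2 := build_apply_orderIso hs (y := z) r
      rw [h1] at e1
      exact Fin.castSucc_injective m (e1.symm.trans e2)
    have hy' : y' = z' := by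
      funext r
      have e1 := build_apply_orderIso ht (y := y') r
      have e2 := build_apply_orderIso ht (y := z') r
      rw [h2] at e1
      exact Fin.castSucc_injective m (e1.symm.trans e2)
    simp [hy, hy']
  · -- surjective
    rintro ⟨x, x'⟩ hp
    simp only [Finset.mem_filter, Finset.mem_univ, true_and] at hp
    obtain ⟨hc, hdeg⟩ := hp
    have hdeg : (Finset.univ.filter fun i => x i ≠ Fin.last m).card = j := hdeg
    have hdeg' : (Finset.univ.filter fun i => x' i ≠ Fin.last m).card = j := by
      have h1 := card_filter_eq_last (x := x)
      have h2 := card_filter_eq_last (x := x')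
      have h3 : (Finset.univ.filter fun i => x i = Fin.last m).card =
          (Finset.univ.filter fun i => x' i = Fin.last m).card := hc (Fin.last m)
      have hdeg2 := hdeg
      have h4 : (Finset.univ.filter fun i => x i ≠ Fin.last m).card ≤ n :=
        (Finset.card_filter_le _ _).trans (by simp)
      have h5 : (Finset.univ.filter fun i => x' i ≠ Fin.last m).card ≤ n :=
        (Finset.card_filter_le _ _).trans (by simp)
      simp only [ne_eq] at h1 h2 hdeg2 h4 h5 ⊢
      omega
    refine ⟨⟨⟨Finset.univ.filter fun i => x i ≠ Fin.last m,
              Finset.univ.filter fun i => x' i ≠ Fin.last m⟩,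
            ⟨fun r => (x (((Finset.univ.filter fun i => x i ≠ Fin.last m).orderIsoOfFin
                hdeg r : Fin n))).castPred ((Finset.mem_filter.mp
                  ((Finset.univ.filter fun i => x i ≠ Fin.last m).orderIsoOfFin
                    hdeg r).2).2),
             fun r => (x' (((Finset.univ.filter fun i => x' i ≠ Fin.last m).orderIsoOfFin
                hdeg' r : Fin n))).castPred ((Finset.mem_filter.mp
                  ((Finset.univ.filter fun i => x' i ≠ Fin.last m).orderIsoOfFin
                    hdeg' r).2).2)⟩⟩, ?_, ?_⟩
    · -- membership in target
      simp only [Finset.mem_product, Finset.mem_powersetCard_univ, Finset.mem_filter,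
        Finset.mem_univ, true_and]
      refine ⟨⟨hdeg, hdeg'⟩, ?_⟩
      intro b
      have e1 := card_build_eq_castSucc hdeg
        (y := fun r => (x (((Finset.univ.filter fun i => x i ≠ Fin.last m).orderIsoOfFin
          hdeg r : Fin n))).castPred ((Finset.mem_filter.mp
            ((Finset.univ.filter fun i => x i ≠ Fin.last m).orderIsoOfFin
              hdeg r).2).2)) b
      have e2 := card_build_eq_castSucc hdeg'
        (y := fun r => (x' (((Finset.univ.filter fun i => x' i ≠ Fin.last m).orderIsoOfFin
          hdeg' r : Fin n))).castPred ((Finset.mem_filter.mp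
            ((Finset.univ.filter fun i => x' i ≠ Fin.last m).orderIsoOfFin
              hdeg' r).2).2)) b
      rw [build_extract x hdeg] at e1
      rw [build_extract x' hdeg'] at e2
      rw [← e1, ← e2]
      exact hc (Fin.castSucc b)
    · -- maps back to (x, x')
      simp only [Prod.mk.injEq]
      exact ⟨build_extract x hdeg, build_extract x' hdeg'⟩
end

section
/- For every integer n ≥ 0, the number of abelian squares of length 2n over a 3-letter alphabet equals f_3(n) = Σ_{0≤i≤n} C(n,i)^2 · C(2i, i). -/
open Finset

-- helper maps between alphabets
private def f32 : Fin 3 → Fin 2 := fun v => if v = 1 then 0 else 1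
private def f23 : Fin 2 → Fin 3 := Fin.succ

private lemma f32_eq_zero_iff : ∀ v : Fin 3, (f32 v = 0 ↔ v = 1) := by decide
private lemma f23_f32 : ∀ v : Fin 3, v ≠ 0 → f23 (f32 v) = v := by decide
private lemma f32_f23 : ∀ v : Fin 2, f32 (f23 v) = v := by decide
private lemma f23_ne_zero : ∀ v : Fin 2, f23 v ≠ 0 := by decide
private lemma f23_eq_one_iff : ∀ v : Fin 2, (f23 v = 1 ↔ v = 0) := by decide
private lemma fin2_ne_zero : ∀ v : Fin 2, v ≠ 0 → v = 1 := by decide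

/-- number of binary words with `b` zeros. -/
private lemma card_binary (α : Type*) [Fintype α] [DecidableEq α] (b : ℕ) :
    Fintype.card {y : α → Fin 2 // (univ.filter fun s => y s = 0).card = b} =
      (Fintype.card α).choose b := by
  rw [← Fintype.card_finset_len]
  apply Fintype.card_congr
  refine ⟨fun y => ⟨univ.filter fun s => y.1 s = 0, y.2⟩,
          fun T => ⟨fun s => if s ∈ T.1 then 0 else 1, ?_⟩, ?_, ?_⟩
  · have hT : (univ.filter fun s => (if s ∈ T.1 then (0 : Fin 2) else 1) = 0) = T.1 := by
      ext s; by_cases h : s ∈ T.1 <;> simp [h]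
    rw [hT]; exact T.2
  · intro y
    apply Subtype.ext; funext s
    by_cases h : y.1 s = 0 <;> simp [h]
    exact (fin2_ne_zero _ h).symm
  · intro T
    apply Subtype.ext; ext s
    by_cases h : s ∈ T.1 <;> simp [h]

/-- counting transfer between a word and its restriction to its support. -/
private lemma card_one_eq {n : ℕ} (x : Fin n → Fin 3) (S : Finset (Fin n))
    (hS : univ.filter (fun i => x i ≠ 0) = S) :
    (univ.filter fun s : {i // i ∈ S} => x ↑s = 1).card =
      (univ.filter fun i => x i = 1).card := by
  refine Finset.card_bij' (fun s _ => (s : Fin n)) (fun i hi => ⟨i, ?_⟩) ?_ ?_ ?_ ?_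
  · rw [← hS, mem_filter]
    refine ⟨mem_univ _, ?_⟩
    rw [mem_filter] at hi
    rw [hi.2]; decide
  · intro s hs; rw [mem_filter] at hs ⊢; exact ⟨mem_univ _, hs.2⟩
  · intro i hi; rw [mem_filter] at hi ⊢; exact ⟨mem_univ _, hi.2⟩
  · intro s _; rfl
  · intro i _; rfl

private lemma card_fiber {n : ℕ} (S : Finset (Fin n)) (b : ℕ) :
    Fintype.card {x : Fin n → Fin 3 //
        univ.filter (fun i => x i ≠ 0) = S ∧ (univ.filter fun i => x i = 1).card = b} =
      S.card.choose b := by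
  rw [← Fintype.card_coe S, ← card_binary {i // i ∈ S} b]
  apply Fintype.card_congr
  refine ⟨fun x => ⟨fun s => f32 (x.1 s), ?_⟩,
          fun y => ⟨fun i => if h : i ∈ S then f23 (y.1 ⟨i, h⟩) else 0, ?_, ?_⟩, ?_, ?_⟩
  · -- count condition for forward map
    have h1 : (univ.filter fun s : {i // i ∈ S} => f32 (x.1 ↑s) = 0) =
        (univ.filter fun s : {i // i ∈ S} => x.1 ↑s = 1) := by
      apply filter_congr; intro s _; simp only [f32_eq_zero_iff]
    rw [h1, card_one_eq x.1 S x.2.1]; exact x.2.2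
  · -- support condition for inverse map
    ext i
    simp only [mem_filter, mem_univ, true_and]
    by_cases h : i ∈ S <;> simp [h, f23_ne_zero]
  · -- count condition for inverse map
    have hsupp : (univ.filter fun i => (if h : i ∈ S then f23 (y.1 ⟨i, h⟩) else 0) ≠ 0) = S := by
      ext i; simp only [mem_filter, mem_univ, true_and]
      by_cases h : i ∈ S <;> simp [h, f23_ne_zero]
    rw [← card_one_eq _ S hsupp]
    have heq : (univ.filter fun s : {i // i ∈ S} =>
        (if h : (s : Fin n) ∈ S then f23 (y.1 ⟨s, h⟩) else 0) = 1) =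
        (univ.filter fun s => y.1 s = 0) := by
      apply filter_congr; intro s _; rw [dif_pos s.2]; exact f23_eq_one_iff _
    rw [heq]; exact y.2
  · intro x
    apply Subtype.ext; funext i
    show (if h : i ∈ S then f23 (f32 (x.1 i)) else 0) = x.1 i
    by_cases h : i ∈ S
    · rw [dif_pos h]
      apply f23_f32
      have hh := h
      rw [← x.2.1, mem_filter] at hh
      exact hh.2
    · rw [dif_neg h]
      have hh := h
      rw [← x.2.1] at hh
      simp only [mem_filter, mem_univ, true_and, not_not] at hh
      exact hh.symm
  · intro y
    apply Subtype.ext; funext s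
    show f32 (if h : ↑s ∈ S then f23 (y.1 ⟨↑s, h⟩) else 0) = y.1 s
    rw [dif_pos s.2, f32_f23]

private lemma card_W (n i b : ℕ) :
    (univ.filter fun x : Fin n → Fin 3 =>
        (univ.filter fun j => x j ≠ 0).card = i ∧ (univ.filter fun j => x j = 1).card = b).card
      = n.choose i * i.choose b := by
  rw [card_eq_sum_card_fiberwise (f := fun x : Fin n → Fin 3 => univ.filter fun j => x j ≠ 0)
      (t := univ.powersetCard i) (fun x hx => by
        rw [mem_coe, mem_filter] at hx
        rw [mem_coe, mem_powersetCard]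
        exact ⟨subset_univ _, hx.2.1⟩)]
  have hterm : ∀ S ∈ univ.powersetCard i,
      ((univ.filter fun x : Fin n → Fin 3 =>
          (univ.filter fun j => x j ≠ 0).card = i ∧ (univ.filter fun j => x j = 1).card = b).filter
        fun x => (univ.filter fun j => x j ≠ 0) = S).card = i.choose b := by
    intro S hS
    rw [mem_powersetCard] at hS
    rw [filter_filter]
    have hpred : (univ.filter fun x : Fin n → Fin 3 =>
        ((univ.filter fun j => x j ≠ 0).card = i ∧ (univ.filter fun j => x j = 1).card = b) ∧
          (univ.filter fun j => x j ≠ 0) = S) =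
        (univ.filter fun x : Fin n → Fin 3 =>
          (univ.filter fun j => x j ≠ 0) = S ∧ (univ.filter fun j => x j = 1).card = b) := by
      apply filter_congr
      intro x _
      constructor
      · rintro ⟨⟨_, h2⟩, h3⟩; exact ⟨h3, h2⟩
      · rintro ⟨h1, h2⟩; rw [h1]; exact ⟨⟨hS.2, h2⟩, rfl⟩
    rw [hpred, ← Fintype.card_subtype, card_fiber S b, hS.2]
  rw [sum_congr rfl hterm, sum_const, card_powersetCard, card_univ, Fintype.card_fin, smul_eq_mul]

private lemma sum_choose_sq (i m : ℕ) (h : i ≤ m) :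
    ∑ b ∈ range (m + 1), (i.choose b) ^ 2 = (2 * i).choose i := by
  rw [two_mul, Nat.add_choose_eq, Finset.Nat.sum_antidiagonal_eq_sum_range_succ_mk]
  rw [← Finset.sum_subset (Finset.range_subset_range.2 (by omega) : range (i+1) ⊆ range (m+1))
      (fun b _ hb => by
        rw [mem_range, not_lt] at hb
        rw [Nat.choose_eq_zero_of_lt (by omega), pow_two, Nat.zero_mul])]
  apply sum_congr rfl
  intro b hb
  rw [mem_range] at hb
  rw [Nat.choose_symm (by omega : b ≤ i), pow_two]

private lemma fin3_cases : ∀ a : Fin 3, a = 0 ∨ a = 1 ∨ a = 2 := by decide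
private lemma fin3_ne_zero_iff : ∀ v : Fin 3, (¬ v = 0 ↔ v = 1 ∨ v = 2) := by decide

private lemma nz_decomp {n : ℕ} (x : Fin n → Fin 3) :
    (univ.filter fun j => x j ≠ 0).card =
      (univ.filter fun j => x j = 1).card + (univ.filter fun j => x j = 2).card := by
  have h1 : (univ.filter fun j => x j ≠ 0) =
      (univ.filter fun j => x j = 1) ∪ (univ.filter fun j => x j = 2) := by
    rw [← filter_or]
    apply filter_congr
    intro j _
    exact fin3_ne_zero_iff (x j)
  rw [h1, card_union_of_disjoint]
  rw [Finset.disjoint_left]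
  intro a h1 h2
  rw [mem_filter] at h1 h2
  rw [h1.2] at h2
  exact absurd h2.2 (by decide)

private lemma cnt_zero {n : ℕ} (x : Fin n → Fin 3) :
    (univ.filter fun j => x j = 0).card + (univ.filter fun j => x j ≠ 0).card = n := by
  have := card_filter_add_card_filter_not (s := (univ : Finset (Fin n)))
    (p := fun j => x j = 0)
  simpa [ne_eq, card_univ] using this

private lemma cond_iff {n : ℕ} (p : (Fin n → Fin 3) × (Fin n → Fin 3)) :
    (∀ a : Fin 3, (univ.filter fun i => p.1 i = a).card = (univ.filter fun i => p.2 i = a).card)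
      ↔ ((univ.filter fun j => p.1 j ≠ 0).card = (univ.filter fun j => p.2 j ≠ 0).card ∧
         (univ.filter fun j => p.1 j = 1).card = (univ.filter fun j => p.2 j = 1).card) := by
  constructor
  · intro h
    refine ⟨?_, h 1⟩
    rw [nz_decomp p.1, nz_decomp p.2, h 1, h 2]
  · rintro ⟨h0, h1⟩ a
    rcases fin3_cases a with rfl | rfl | rfl
    · have d1 := cnt_zero p.1
      have d2 := cnt_zero p.2
      omega
    · exact h1
    · have d1 := nz_decomp p.1
      have d2 := nz_decomp p.2
      omega

theorem abelianSquares_three (n : ℕ) :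
    abelianSquares 3 n =
      ∑ i ∈ Finset.range (n + 1), (n.choose i) ^ 2 * (2 * i).choose i := by
  unfold abelianSquares
  rw [Fintype.card_subtype]
  rw [card_eq_sum_card_fiberwise
      (f := fun p : (Fin n → Fin 3) × (Fin n → Fin 3) =>
        ((univ.filter fun j => p.1 j ≠ 0).card, (univ.filter fun j => p.1 j = 1).card))
      (t := range (n + 1) ×ˢ range (n + 1))
      (fun p _ => by
        rw [mem_coe, mem_product, mem_range, mem_range]
        dsimp only
        constructor <;>
          exact Nat.lt_succ_of_le (le_trans (card_filter_le _ _) (by simp)))]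
  rw [Finset.sum_product]
  apply sum_congr rfl
  intro i hi
  rw [mem_range] at hi
  have hterm : ∀ b ∈ range (n + 1),
      (((univ : Finset ((Fin n → Fin 3) × (Fin n → Fin 3))).filter fun p =>
          ∀ a : Fin 3, (univ.filter fun k => p.1 k = a).card =
            (univ.filter fun k => p.2 k = a).card).filter
        (fun p => ((univ.filter fun j => p.1 j ≠ 0).card,
            (univ.filter fun j => p.1 j = 1).card) = (i, b))).card
      = (n.choose i * i.choose b) ^ 2 := by
    intro b _
    rw [filter_filter]
    have hpred : ((univ : Finset ((Fin n → Fin 3) × (Fin n → Fin 3))).filter fun p =>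
        (∀ a : Fin 3, (univ.filter fun k => p.1 k = a).card =
            (univ.filter fun k => p.2 k = a).card) ∧
          ((univ.filter fun j => p.1 j ≠ 0).card,
            (univ.filter fun j => p.1 j = 1).card) = (i, b)) =
        (univ.filter fun p : (Fin n → Fin 3) × (Fin n → Fin 3) =>
          ((univ.filter fun j => p.1 j ≠ 0).card = i ∧
            (univ.filter fun j => p.1 j = 1).card = b) ∧
          ((univ.filter fun j => p.2 j ≠ 0).card = i ∧
            (univ.filter fun j => p.2 j = 1).card = b)) := by
      apply filter_congr
      intro p _
      rw [cond_iff p, Prod.mk.injEq]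
      constructor
      · rintro ⟨⟨e0, e1⟩, f0, f1⟩
        exact ⟨⟨f0, f1⟩, ⟨e0 ▸ f0, e1 ▸ f1⟩⟩
      · rintro ⟨⟨f0, f1⟩, g0, g1⟩
        exact ⟨⟨f0.trans g0.symm, f1.trans g1.symm⟩, f0, f1⟩
    rw [hpred, ← Finset.univ_product_univ,
      filter_product
        (fun x : Fin n → Fin 3 =>
          (univ.filter fun j => x j ≠ 0).card = i ∧ (univ.filter fun j => x j = 1).card = b)
        (fun x : Fin n → Fin 3 =>
          (univ.filter fun j => x j ≠ 0).card = i ∧ (univ.filter fun j => x j = 1).card = b),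
      card_product, ← card_W n i b, sq]
  rw [sum_congr rfl hterm]
  have : ∑ b ∈ range (n + 1), (n.choose i * i.choose b) ^ 2 =
      n.choose i ^ 2 * ∑ b ∈ range (n + 1), (i.choose b) ^ 2 := by
    rw [Finset.mul_sum]
    apply sum_congr rfl
    intro b _
    rw [mul_pow]
  rw [this, sum_choose_sq i n (by omega)]
end

section
/- For all integers k₁, k₂ ≥ 1 and n ≥ 0, the numbers of abelian squares satisfy f_{k₁+k₂}(n) = Σ_{0≤i≤n} C(n,i)^2 · f_{k₁}(i) · f_{k₂}(n−i). -/
open Finset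

section aux

/-- count of letter `b` in the word `x`. -/
def cnt {α β : Type} [Fintype α] [DecidableEq β] (x : α → β) (b : β) : ℕ :=
  (Finset.univ.filter fun i => x i = b).card

/-- pairs of words (of possibly different position types) with equal letter counts. -/
def ASq (β : Type) [DecidableEq β] (α α' : Type) [Fintype α] [Fintype α'] : Type :=
  {p : (α → β) × (α' → β) // ∀ b, cnt p.1 b = cnt p.2 b}

instance ASq.fintype (β : Type) [DecidableEq β] [Fintype β] (α α' : Type)
    [Fintype α] [Fintype α'] [DecidableEq α] [DecidableEq α'] : Fintype (ASq β α α') := by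
  unfold ASq; infer_instance

variable {α α' γ γ' β β' : Type} [Fintype α] [Fintype α'] [Fintype γ] [Fintype γ']
  [DecidableEq β] [DecidableEq β']

lemma cnt_comp_equiv (e : γ ≃ α) (x : α → β) (b : β) : cnt (x ∘ e) b = cnt x b := by
  unfold cnt
  exact Finset.card_equiv e (by simp)

lemma cnt_map (g : β ≃ β') (x : α → β) (b : β') : cnt (g ∘ x) b = cnt x (g.symm b) := by
  unfold cnt
  congr 1
  ext i
  simp [Equiv.apply_eq_iff_eq_symm_apply]

lemma sum_cnt [Fintype β] (x : α → β) : ∑ b, cnt x b = Fintype.card α := by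
  unfold cnt
  rw [← Finset.card_univ,
    Finset.card_eq_sum_card_fiberwise (f := x) (fun i _ => Finset.mem_univ (x i))]

lemma ASq_card_zero [Fintype β] [DecidableEq α] [DecidableEq α']
    (h : Fintype.card α ≠ Fintype.card α') :
    Fintype.card (ASq β α α') = 0 := by
  rw [Fintype.card_eq_zero_iff]
  constructor
  rintro ⟨⟨x, x'⟩, hp⟩
  apply h
  rw [← sum_cnt x, ← sum_cnt x']
  exact Finset.sum_congr rfl fun b _ => hp b

/-- equivalence for changing position types. -/
def ASqEquiv (e : γ ≃ α) (e' : γ' ≃ α') : ASq β α α' ≃ ASq β γ γ' where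
  toFun p := ⟨(p.1.1 ∘ e, p.1.2 ∘ e'), fun b => by
    rw [cnt_comp_equiv, cnt_comp_equiv]; exact p.2 b⟩
  invFun p := ⟨(p.1.1 ∘ e.symm, p.1.2 ∘ e'.symm), fun b => by
    rw [cnt_comp_equiv, cnt_comp_equiv]; exact p.2 b⟩
  left_inv p := by
    apply Subtype.ext
    apply Prod.ext <;> funext i <;> simp
  right_inv p := by
    apply Subtype.ext
    apply Prod.ext <;> funext i <;> simp

/-- equivalence for changing the alphabet. -/
def ASqMapEquiv (g : β ≃ β') : ASq β α α' ≃ ASq β' α α' where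
  toFun p := ⟨(g ∘ p.1.1, g ∘ p.1.2), fun b => by
    rw [cnt_map, cnt_map]; exact p.2 _⟩
  invFun p := ⟨(g.symm ∘ p.1.1, g.symm ∘ p.1.2), fun b => by
    rw [cnt_map, cnt_map]; exact p.2 _⟩
  left_inv p := by
    apply Subtype.ext
    apply Prod.ext <;> funext i <;> simp
  right_inv p := by
    apply Subtype.ext
    apply Prod.ext <;> funext i <;> simp

lemma abelianSquares_eq (k n : ℕ) :
    abelianSquares k n = Fintype.card (ASq (Fin k) (Fin n) (Fin n)) := by
  apply Fintype.card_congr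
  exact Equiv.refl _

lemma ASq_card_eq [Fintype β] [DecidableEq α] [DecidableEq α'] (k : ℕ) (g : β ≃ Fin k)
    (h : Fintype.card α = Fintype.card α') :
    Fintype.card (ASq β α α') = abelianSquares k (Fintype.card α) := by
  rw [abelianSquares_eq]
  exact Fintype.card_congr
    ((ASqMapEquiv g).trans
      (ASqEquiv (Fintype.equivFinOfCardEq rfl).symm
        (Fintype.equivFinOfCardEq h.symm).symm))

end aux

section split

variable {α α' β₁ β₂ : Type} [Fintype α] [Fintype α'] [DecidableEq α] [DecidableEq α']
  [DecidableEq β₁] [DecidableEq β₂]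

/-- positions carrying a left letter. -/
def suppL (x : α → β₁ ⊕ β₂) : Finset α := Finset.univ.filter fun i => (x i).isLeft

lemma mem_suppL {x : α → β₁ ⊕ β₂} {S : Finset α} (h : suppL x = S) {i : α} :
    i ∈ S ↔ (x i).isLeft := by
  rw [← h]; simp [suppL]

/-- restriction of a word to its left positions. -/
def restL (x : α → β₁ ⊕ β₂) (S : Finset α) (h : suppL x = S) (i : ↥S) : β₁ :=
  (x i).getLeft ((mem_suppL h).mp i.2)

/-- restriction of a word to its right positions. -/
def restR (x : α → β₁ ⊕ β₂) (S : Finset α) (h : suppL x = S) (i : ↥(Sᶜ)) : β₂ :=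
  (x i).getRight (by
    have hi : i.1 ∉ S := Finset.mem_compl.mp i.2
    rw [mem_suppL h] at hi
    exact Sum.not_isLeft.mp hi)

lemma cnt_restL (x : α → β₁ ⊕ β₂) (S : Finset α) (h : suppL x = S) (b : β₁) :
    cnt (restL x S h) b = cnt x (Sum.inl b) := by
  unfold cnt
  refine Finset.card_bij' (fun a _ => a.1) (fun a ha => ⟨a, ?_⟩) ?_ ?_ ?_ ?_
  · rw [Finset.mem_filter] at ha
    rw [mem_suppL h, ha.2]
    rfl
  · rintro ⟨a, haS⟩ ha
    rw [Finset.mem_filter] at ha ⊢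
    refine ⟨Finset.mem_univ _, ?_⟩
    have hl := (mem_suppL h).mp haS
    obtain ⟨c, hc⟩ := Sum.isLeft_iff.mp hl
    have : restL x S h ⟨a, haS⟩ = c := by simp [restL, hc]
    rw [this] at ha
    rw [hc, ha.2]
  · intro a ha
    rw [Finset.mem_filter] at ha ⊢
    refine ⟨Finset.mem_univ _, ?_⟩
    simp [restL, ha.2]
  · intro a ha; rfl
  · intro a ha; rfl

lemma cnt_restR (x : α → β₁ ⊕ β₂) (S : Finset α) (h : suppL x = S) (b : β₂) :
    cnt (restR x S h) b = cnt x (Sum.inr b) := by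
  unfold cnt
  refine Finset.card_bij' (fun a _ => a.1) (fun a ha => ⟨a, ?_⟩) ?_ ?_ ?_ ?_
  · rw [Finset.mem_filter] at ha
    rw [Finset.mem_compl, mem_suppL h, ha.2]
    simp
  · rintro ⟨a, haS⟩ ha
    rw [Finset.mem_filter] at ha ⊢
    refine ⟨Finset.mem_univ _, ?_⟩
    have hl : ¬ (x a).isLeft := by
      have := Finset.mem_compl.mp haS
      rwa [mem_suppL h] at this
    have hr : (x a).isRight := Sum.not_isLeft.mp hl
    obtain ⟨c, hc⟩ := Sum.isRight_iff.mp hr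
    have : restR x S h ⟨a, haS⟩ = c := by simp [restR, hc]
    rw [this] at ha
    rw [hc, ha.2]
  · intro a ha
    rw [Finset.mem_filter] at ha ⊢
    refine ⟨Finset.mem_univ _, ?_⟩
    simp [restR, ha.2]
  · intro a ha; rfl
  · intro a ha; rfl

/-- recombine two words into one over the sum alphabet. -/
def comb (S : Finset α) (y : ↥S → β₁) (z : ↥(Sᶜ) → β₂) (i : α) : β₁ ⊕ β₂ :=
  if h : i ∈ S then Sum.inl (y ⟨i, h⟩) else Sum.inr (z ⟨i, Finset.mem_compl.mpr h⟩)

lemma suppL_comb (S : Finset α) (y : ↥S → β₁) (z : ↥(Sᶜ) → β₂) :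
    suppL (comb S y z) = S := by
  ext i
  simp only [suppL, Finset.mem_filter, Finset.mem_univ, true_and, comb]
  refine Finset.mem_filter.trans ?_
  by_cases h : i ∈ S <;> simp [h]

lemma restL_comb (S : Finset α) (y : ↥S → β₁) (z : ↥(Sᶜ) → β₂) (h : suppL (comb S y z) = S) :
    restL (comb S y z) S h = y := by
  funext i
  have : comb S y z i.1 = Sum.inl (y i) := by simp [comb, i.2]
  simp [restL, this]

lemma restR_comb (S : Finset α) (y : ↥S → β₁) (z : ↥(Sᶜ) → β₂) (h : suppL (comb S y z) = S) :
    restR (comb S y z) S h = z := by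
  funext i
  have hi : i.1 ∉ S := Finset.mem_compl.mp i.2
  have : comb S y z i.1 = Sum.inr (z ⟨i.1, Finset.mem_compl.mpr hi⟩) := by simp [comb, hi]
  simp [restR, this]

lemma comb_rest (x : α → β₁ ⊕ β₂) (S : Finset α) (h : suppL x = S) :
    comb S (restL x S h) (restR x S h) = x := by
  funext i
  by_cases hi : i ∈ S
  · have hl := (mem_suppL h).mp hi
    obtain ⟨c, hc⟩ := Sum.isLeft_iff.mp hl
    simp [comb, hi, restL, hc]
  · have hl : ¬ (x i).isLeft := fun hl => hi ((mem_suppL h).mpr hl)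
    obtain ⟨c, hc⟩ := Sum.isRight_iff.mp (Sum.not_isLeft.mp hl)
    simp [comb, hi, restR, hc]

/-- The main splitting equivalence for a fixed pair of left-supports. -/
def splitEquiv [Fintype β₁] [Fintype β₂] (S : Finset α) (S' : Finset α') :
    {p : ASq (β₁ ⊕ β₂) α α' // suppL p.1.1 = S ∧ suppL p.1.2 = S'} ≃
      ASq β₁ ↥S ↥S' × ASq β₂ ↥(Sᶜ) ↥(S'ᶜ) where
  toFun q :=
    ⟨⟨(restL q.1.1.1 S q.2.1, restL q.1.1.2 S' q.2.2), fun b => by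
        rw [cnt_restL, cnt_restL]; exact q.1.2 (Sum.inl b)⟩,
     ⟨(restR q.1.1.1 S q.2.1, restR q.1.1.2 S' q.2.2), fun b => by
        rw [cnt_restR, cnt_restR]; exact q.1.2 (Sum.inr b)⟩⟩
  invFun r :=
    ⟨⟨(comb S r.1.1.1 r.2.1.1, comb S' r.1.1.2 r.2.1.2), by
        rintro (b | b)
        · rw [← cnt_restL (comb S r.1.1.1 r.2.1.1) S (suppL_comb S r.1.1.1 r.2.1.1) b,
            ← cnt_restL (comb S' r.1.1.2 r.2.1.2) S' (suppL_comb S' r.1.1.2 r.2.1.2) b,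
            restL_comb, restL_comb]
          exact r.1.2 b
        · rw [← cnt_restR (comb S r.1.1.1 r.2.1.1) S (suppL_comb S r.1.1.1 r.2.1.1) b,
            ← cnt_restR (comb S' r.1.1.2 r.2.1.2) S' (suppL_comb S' r.1.1.2 r.2.1.2) b,
            restR_comb, restR_comb]
          exact r.2.2 b⟩,
     suppL_comb _ _ _, suppL_comb _ _ _⟩
  left_inv q := by
    apply Subtype.ext
    apply Subtype.ext
    apply Prod.ext
    · exact comb_rest q.1.1.1 S q.2.1
    · exact comb_rest q.1.1.2 S' q.2.2
  right_inv r := by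
    apply Prod.ext
    · apply Subtype.ext
      apply Prod.ext
      · exact restL_comb S r.1.1.1 r.2.1.1 (suppL_comb _ _ _)
      · exact restL_comb S' r.1.1.2 r.2.1.2 (suppL_comb _ _ _)
    · apply Subtype.ext
      apply Prod.ext
      · exact restR_comb S r.1.1.1 r.2.1.1 (suppL_comb _ _ _)
      · exact restR_comb S' r.1.1.2 r.2.1.2 (suppL_comb _ _ _)

lemma card_ASq_sum [Fintype β₁] [Fintype β₂] :
    Fintype.card (ASq (β₁ ⊕ β₂) α α') =
      ∑ S : Finset α, ∑ S' : Finset α',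
        Fintype.card (ASq β₁ ↥S ↥S') * Fintype.card (ASq β₂ ↥(Sᶜ) ↥(S'ᶜ)) := by
  classical
  rw [← Finset.card_univ,
    Finset.card_eq_sum_card_fiberwise
      (f := fun p : ASq (β₁ ⊕ β₂) α α' => (suppL p.1.1, suppL p.1.2))
      (t := Finset.univ) (fun p _ => Finset.mem_univ _),
    ← Finset.univ_product_univ, Finset.sum_product]
  refine Finset.sum_congr rfl fun S _ => Finset.sum_congr rfl fun S' _ => ?_
  rw [← Fintype.card_subtype, ← Fintype.card_prod]
  refine Fintype.card_congr ((Equiv.subtypeEquivRight ?_).trans (splitEquiv S S'))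
  intro p
  simp [Prod.ext_iff]

end split

theorem abelianSquares_add (k₁ k₂ : ℕ) (hk₁ : 1 ≤ k₁) (hk₂ : 1 ≤ k₂) (n : ℕ) :
    abelianSquares (k₁ + k₂) n =
      ∑ i ∈ Finset.range (n + 1),
        (n.choose i) ^ 2 * abelianSquares k₁ i * abelianSquares k₂ (n - i) := by
  classical
  have h0 : abelianSquares (k₁ + k₂) n
      = Fintype.card (ASq (Fin k₁ ⊕ Fin k₂) (Fin n) (Fin n)) := by
    rw [abelianSquares_eq]
    exact Fintype.card_congr (ASqMapEquiv finSumFinEquiv.symm)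
  rw [h0, card_ASq_sum]
  -- now compute each term
  have key : ∀ (S S' : Finset (Fin n)),
      Fintype.card (ASq (Fin k₁) ↥S ↥S') * Fintype.card (ASq (Fin k₂) ↥(Sᶜ) ↥(S'ᶜ)) =
        if S.card = S'.card then abelianSquares k₁ S.card * abelianSquares k₂ (n - S.card)
        else 0 := by
    intro S S'
    by_cases h : S.card = S'.card
    · rw [if_pos h]
      have h1 : Fintype.card ↥S = Fintype.card ↥S' := by
        simp [Fintype.card_coe, h]
      have h2 : Fintype.card ↥(Sᶜ) = Fintype.card ↥(S'ᶜ) := by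
        simp [Fintype.card_coe, Finset.card_compl, h, Fintype.card_fin]
      rw [ASq_card_eq k₁ (Equiv.refl _) h1, ASq_card_eq k₂ (Equiv.refl _) h2]
      simp [Fintype.card_coe, Finset.card_compl, Fintype.card_fin]
    · rw [if_neg h]
      have : Fintype.card ↥S ≠ Fintype.card ↥S' := by
        simpa [Fintype.card_coe] using h
      rw [ASq_card_zero this, zero_mul]
  simp only [key]
  -- regroup the double sum over subsets by cardinality
  rw [← Finset.powerset_univ, Finset.sum_powerset]
  rw [Finset.card_univ, Fintype.card_fin]
  refine Finset.sum_congr rfl fun i hi => ?_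
  have hcard : ∀ S ∈ Finset.powersetCard i (Finset.univ : Finset (Fin n)), S.card = i :=
    fun S hS => (Finset.mem_powersetCard.mp hS).2
  calc ∑ S ∈ Finset.powersetCard i Finset.univ, ∑ S' : Finset (Fin n),
        (if S.card = S'.card then
          abelianSquares k₁ S.card * abelianSquares k₂ (n - S.card) else 0)
      = ∑ S ∈ Finset.powersetCard i Finset.univ, ∑ S' : Finset (Fin n),
        (if i = S'.card then abelianSquares k₁ i * abelianSquares k₂ (n - i) else 0) := by
        refine Finset.sum_congr rfl fun S hS => ?_
        rw [hcard S hS]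
    _ = ∑ S ∈ Finset.powersetCard i Finset.univ,
          (Finset.univ.filter fun S' : Finset (Fin n) => i = S'.card).card *
            (abelianSquares k₁ i * abelianSquares k₂ (n - i)) := by
        refine Finset.sum_congr rfl fun S _ => ?_
        rw [← Finset.sum_filter, Finset.sum_const, smul_eq_mul]
    _ = (n.choose i) ^ 2 * abelianSquares k₁ i * abelianSquares k₂ (n - i) := by
        have hfilt : (Finset.univ.filter fun S' : Finset (Fin n) => i = S'.card) =
            Finset.powersetCard i Finset.univ := by
          ext S'
          simp [Finset.mem_powersetCard, eq_comm]
        rw [Finset.sum_const, hfilt, Finset.card_powersetCard, Finset.card_univ,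
          Fintype.card_fin, smul_eq_mul]
        ring
end

section
/- Fix integers m ≥ 1 and l with 1 ≤ l ≤ m, and real numbers x_{l+1}, …, x_m. Define, for 0 ≤ j ≤ m, S_{m,j}(x_{j+1},…,x_m) = ((j+2)/(j+1)) · Σ_{j+1≤i≤m} x_i² + (2/(j+1)) · Σ_{j+1≤i<i'≤m} x_i·x_{i'} (so that S_{m,0} = Σ_{1≤i≤m} x_i² + (Σ_{1≤i≤m} x_i)²). Then ∫_{−∞}^{∞} exp(−S_{m,l−1}(x_l, x_{l+1}, …, x_m)) dx_l = π^{1/2} · (l/(l+1))^{1/2} · exp(−S_{m,l}(x_{l+1},…,x_m)). -/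
open Real MeasureTheory

/-- The quadratic form `S_{m,j}` in the variables `x_{j+1}, …, x_m`:
`S_{m,j} = ((j+2)/(j+1)) · Σ_{j+1 ≤ i ≤ m} x_i² + (2/(j+1)) · Σ_{j+1 ≤ i < i' ≤ m} x_i x_{i'}`. -/
noncomputable def S (m j : ℕ) (x : ℕ → ℝ) : ℝ :=
  ((j + 2 : ℝ) / (j + 1)) * ∑ i ∈ Finset.Icc (j + 1) m, x i ^ 2 +
    (2 / (j + 1 : ℝ)) *
      ∑ i ∈ Finset.Icc (j + 1) m, ∑ i' ∈ Finset.Icc (i + 1) m, x i * x i'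

lemma sq_sum_Icc_aux (f : ℕ → ℝ) (m : ℕ) :
    ∀ k a, m + 1 - a = k →
      (∑ i ∈ Finset.Icc a m, f i) ^ 2 =
        ∑ i ∈ Finset.Icc a m, f i ^ 2 +
          2 * ∑ i ∈ Finset.Icc a m, ∑ j ∈ Finset.Icc (i + 1) m, f i * f j := by
  intro k
  induction k with
  | zero =>
    intro a ha
    rw [Finset.Icc_eq_empty (by omega)]
    simp
  | succ k ih =>
    intro a ha
    have hins : Finset.Icc a m = insert a (Finset.Icc (a + 1) m) := by
      ext i; simp only [Finset.mem_Icc, Finset.mem_insert]; omega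
    have hnot : a ∉ Finset.Icc (a + 1) m := by
      simp only [Finset.mem_Icc]; omega
    rw [hins, Finset.sum_insert hnot, Finset.sum_insert hnot, Finset.sum_insert hnot,
      ← Finset.mul_sum]
    have hB := ih (a + 1) (by omega)
    linear_combination hB

theorem integral_exp_neg_S (m l : ℕ) (hm : 1 ≤ m) (hl : 1 ≤ l) (hlm : l ≤ m)
    (x : ℕ → ℝ) :
    ∫ t : ℝ, Real.exp (-S m (l - 1) (Function.update x l t)) =
      π ^ ((1 : ℝ) / 2) * ((l : ℝ) / (l + 1)) ^ ((1 : ℝ) / 2) *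
        Real.exp (-S m l x) := by
  set ℓ : ℝ := (l : ℝ) with hℓdef
  have hℓpos : (0 : ℝ) < ℓ := by rw [hℓdef]; exact_mod_cast hl
  have hℓ0 : ℓ ≠ 0 := ne_of_gt hℓpos
  have hℓ1 : ℓ + 1 ≠ 0 := by positivity
  set B : ℝ := ∑ i ∈ Finset.Icc (l + 1) m, x i with hBdef
  set Q : ℝ := ∑ i ∈ Finset.Icc (l + 1) m, x i ^ 2 with hQdef
  set C : ℝ := ∑ i ∈ Finset.Icc (l + 1) m, ∑ i' ∈ Finset.Icc (i + 1) m, x i * x i'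
    with hCdef
  have hB2 : B ^ 2 = Q + 2 * C := sq_sum_Icc_aux x m (m + 1 - (l + 1)) (l + 1) rfl
  set a : ℝ := (ℓ + 1) / ℓ with hadef
  set b : ℝ := B / (ℓ + 1) with hbdef
  have hcast : ((l - 1 : ℕ) : ℝ) = ℓ - 1 := by
    rw [Nat.cast_sub hl]; simp [hℓdef]
  have hidx : l - 1 + 1 = l := by omega
  have key : ∀ t : ℝ, S m (l - 1) (Function.update x l t) = a * (t + b) ^ 2 + S m l x := by
    intro t
    have hins : Finset.Icc l m = insert l (Finset.Icc (l + 1) m) := by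
      ext i; simp only [Finset.mem_Icc, Finset.mem_insert]; omega
    have hnot : l ∉ Finset.Icc (l + 1) m := by
      simp only [Finset.mem_Icc]; omega
    have sum1 : ∑ i ∈ Finset.Icc l m, (Function.update x l t i) ^ 2 = t ^ 2 + Q := by
      rw [hins, Finset.sum_insert hnot, Function.update_self]
      congr 1
      refine Finset.sum_congr rfl fun i hi => ?_
      rw [Function.update_of_ne (by simp only [Finset.mem_Icc] at hi; omega)]
    have sum2 : ∑ i ∈ Finset.Icc l m, ∑ i' ∈ Finset.Icc (i + 1) m,
        (Function.update x l t i) * (Function.update x l t i') = t * B + C := by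
      rw [hins, Finset.sum_insert hnot]
      congr 1
      · rw [Finset.mul_sum]
        refine Finset.sum_congr rfl fun i' hi' => ?_
        simp only [Finset.mem_Icc] at hi'
        rw [Function.update_self, Function.update_of_ne (by omega)]
      · refine Finset.sum_congr rfl fun i hi => ?_
        simp only [Finset.mem_Icc] at hi
        refine Finset.sum_congr rfl fun i' hi' => ?_
        simp only [Finset.mem_Icc] at hi'
        rw [Function.update_of_ne (by omega), Function.update_of_ne (by omega)]
    simp only [S, hidx, hcast, sum1, sum2, ← hBdef, ← hQdef, ← hCdef]
    have hQ' : Q = B ^ 2 - 2 * C := by linarith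
    rw [hQ', hadef, hbdef]
    have h2 : ℓ - 1 + 1 = ℓ := by ring
    have h3 : ℓ - 1 + 2 = ℓ + 1 := by ring
    rw [h2, h3]
    field_simp
    ring
  simp_rw [key, neg_add, Real.exp_add, integral_mul_const]
  have hgauss : ∫ t : ℝ, Real.exp (-(a * (t + b) ^ 2)) = Real.sqrt (π / a) := by
    have := MeasureTheory.integral_add_right_eq_self
      (μ := (volume : Measure ℝ)) (fun t : ℝ => Real.exp (-(a * t ^ 2))) b
    rw [this]
    simp_rw [neg_mul_eq_neg_mul] at *
    exact integral_gaussian a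
  rw [hgauss]
  have hπa : π / a = π * (ℓ / (ℓ + 1)) := by
    rw [hadef]; field_simp
  rw [hπa, Real.sqrt_mul Real.pi_pos.le, Real.sqrt_eq_rpow, Real.sqrt_eq_rpow]
end
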